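/- For the Hellinger regularizer h(x) = -√(1 - x²) on [-1,1], the Bregman divergence satisfies D(1, x) = √((1-x)/(1+x)) for x ∈ (-1,1), which is Θ(|x - 1|^{1/2}) as x → 1⁻; hence the Legendre exponent of h at 1 equals 3/4. -/

import Mathlib

open Filter Topology

/-- for the Hellinger regularizer `h(x) = -√(1-x²)` on `[-1,1]`,
`D(1,x) = √((1-x)/(1+x))` for `x ∈ (-1,1)`, which is `Θ(|x-1|^{1/2})` as
`x → 1⁻`; hence the Legendre exponent of `h` at `1` equals `3/4`. -/
theorem stmt_5 :
    (∀ x : ℝ, -1 < x → x < 1 →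
      -Real.sqrt (1 - 1 ^ 2) - (-Real.sqrt (1 - x ^ 2))
        - x / Real.sqrt (1 - x ^ 2) * (1 - x) = Real.sqrt ((1 - x) / (1 + x))) ∧
    (∃ c > (0:ℝ), ∃ C > (0:ℝ), ∀ᶠ x in nhdsWithin 1 (Set.Ico (-1:ℝ) 1),
      c * |x - 1| ^ ((1:ℝ) / 2) ≤ Real.sqrt ((1 - x) / (1 + x)) ∧
      Real.sqrt ((1 - x) / (1 + x)) ≤ C * |x - 1| ^ ((1:ℝ) / 2)) ∧
    sInf {l : ℝ | l ∈ Set.Icc (0:ℝ) 1 ∧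
      ∃ C : ℝ, ∀ᶠ x in nhdsWithin 1 (Set.Ico (-1:ℝ) 1),
        Real.sqrt (Real.sqrt ((1 - x) / (1 + x))) / |x - 1| ^ (1 - l) ≤ C} = 3 / 4 := by
  refine ⟨?_, ?_, ?_⟩
  · intro x h1 h2
    have hx2 : (0:ℝ) < 1 - x ^ 2 := by nlinarith
    have hs : 0 < Real.sqrt (1 - x ^ 2) := Real.sqrt_pos.2 hx2
    have hsq : Real.sqrt (1 - x ^ 2) ^ 2 = 1 - x ^ 2 := Real.sq_sqrt hx2.le
    have h1x : (0:ℝ) < 1 - x := by linarith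
    have h1x' : (0:ℝ) < 1 + x := by linarith
    have key : Real.sqrt ((1 - x) / (1 + x)) = (1 - x) / Real.sqrt (1 - x ^ 2) := by
      rw [show (1 - x) / (1 + x) = (1 - x)^2 / (1 - x^2) by field_simp; ring,
        Real.sqrt_div (by positivity), Real.sqrt_sq h1x.le]
    rw [key]
    have : Real.sqrt (1 - 1 ^ 2) = 0 := by norm_num
    rw [this]
    field_simp
    nlinarith [hsq]
  ·
    refine ⟨1/2, by norm_num, 1, by norm_num, ?_⟩
    rw [nhdsWithin_Ico_eq_nhdsLT (by norm_num : (-1:ℝ) < 1)]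
    filter_upwards [Ioo_mem_nhdsLT (by norm_num : (0:ℝ) < 1)] with x hx
    obtain ⟨hx0, hx1⟩ := hx
    have h1x : (0:ℝ) < 1 - x := by linarith
    have habs : |x - 1| = 1 - x := by rw [abs_sub_comm, abs_of_pos h1x]
    have hrpow : |x - 1| ^ ((1:ℝ)/2) = Real.sqrt (1 - x) := by
      rw [habs, Real.sqrt_eq_rpow]
    rw [hrpow, Real.sqrt_div h1x.le]
    have hsx : 0 < Real.sqrt (1 - x) := Real.sqrt_pos.2 h1x
    have hs1 : (1:ℝ) ≤ Real.sqrt (1 + x) := by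
      have := Real.sqrt_le_sqrt (show (1:ℝ) ≤ 1 + x by linarith)
      rwa [Real.sqrt_one] at this
    have hs2 : Real.sqrt (1 + x) ≤ 2 := by
      have := Real.sqrt_le_sqrt (show (1 + x : ℝ) ≤ 4 by linarith)
      rwa [show Real.sqrt 4 = 2 by
        rw [show (4:ℝ) = 2^2 by norm_num, Real.sqrt_sq (by norm_num)]] at this
    have hsp : (0:ℝ) < Real.sqrt (1 + x) := by linarith
    constructor
    · rw [le_div_iff₀ hsp]; nlinarith
    · rw [div_le_iff₀ hsp]; nlinarith
  ·
    set S := {l : ℝ | l ∈ Set.Icc (0:ℝ) 1 ∧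
        ∃ C : ℝ, ∀ᶠ x in nhdsWithin 1 (Set.Ico (-1:ℝ) 1),
          Real.sqrt (Real.sqrt ((1 - x) / (1 + x))) / |x - 1| ^ (1 - l) ≤ C} with hS
    have hIco : nhdsWithin (1:ℝ) (Set.Ico (-1:ℝ) 1) = 𝓝[<] (1:ℝ) :=
      nhdsWithin_Ico_eq_nhdsLT (by norm_num)
    have hmem : (3/4 : ℝ) ∈ S := by
      refine ⟨⟨by norm_num, by norm_num⟩, 1, ?_⟩
      rw [hIco]
      filter_upwards [Ioo_mem_nhdsLT (by norm_num : (0:ℝ) < 1)] with x hx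
      obtain ⟨hx0, hx1⟩ := hx
      have h1x : (0:ℝ) < 1 - x := by linarith
      have habs : |x - 1| = 1 - x := by rw [abs_sub_comm, abs_of_pos h1x]
      have hb : (0:ℝ) < |x - 1| ^ (1 - (3/4:ℝ)) := by
        rw [habs]; positivity
      rw [div_le_one hb, habs]
      have h14 : (1 - x : ℝ) ^ (1 - (3/4:ℝ)) = Real.sqrt (Real.sqrt (1 - x)) := by
        rw [show (1 - (3/4:ℝ)) = (1/2) * (1/2) by norm_num,
          Real.rpow_mul h1x.le, ← Real.sqrt_eq_rpow, ← Real.sqrt_eq_rpow]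
      rw [h14]
      apply Real.sqrt_le_sqrt
      apply Real.sqrt_le_sqrt
      rw [div_le_iff₀ (by linarith : (0:ℝ) < 1 + x)]
      nlinarith
    have hlb : ∀ l ∈ S, (3/4 : ℝ) ≤ l := by
      rintro l ⟨⟨hl0, hl1⟩, C, hC⟩
      by_contra hlt
      push_neg at hlt
      set ε : ℝ := 3/4 - l with hε
      have hεpos : 0 < ε := by simp only [hε]; linarith
      rw [hIco] at hC
      have hlow : ∀ᶠ x in 𝓝[<] (1:ℝ),
          (1/2 : ℝ) * ((1 - x) ^ ε)⁻¹ ≤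
            Real.sqrt (Real.sqrt ((1 - x) / (1 + x))) / |x - 1| ^ (1 - l) := by
        filter_upwards [Ioo_mem_nhdsLT (by norm_num : (0:ℝ) < 1)] with x hx
        obtain ⟨hx0, hx1⟩ := hx
        have h1x : (0:ℝ) < 1 - x := by linarith
        have habs : |x - 1| = 1 - x := by rw [abs_sub_comm, abs_of_pos h1x]
        have hinv : ((1 - x) ^ ε)⁻¹ = (1 - x) ^ (-ε) := (Real.rpow_neg h1x.le ε).symm
        have hnum : ((1 - x)/2 : ℝ) ^ ((1:ℝ)/4) ≤ Real.sqrt (Real.sqrt ((1 - x) / (1 + x))) := by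
          rw [show ((1:ℝ)/4) = (1/2) * (1/2) by norm_num,
            Real.rpow_mul (by positivity), ← Real.sqrt_eq_rpow, ← Real.sqrt_eq_rpow]
          apply Real.sqrt_le_sqrt
          apply Real.sqrt_le_sqrt
          rw [div_le_div_iff₀ (by norm_num) (by linarith : (0:ℝ) < 1 + x)]
          nlinarith
        have hden : (0:ℝ) < |x - 1| ^ (1 - l) := by rw [habs]; positivity
        rw [hinv, le_div_iff₀ hden, habs]
        calc (1/2 : ℝ) * (1 - x) ^ (-ε) * (1 - x) ^ (1 - l)
            = (1/2) * (1 - x) ^ ((1:ℝ)/4) := by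
              rw [mul_assoc, ← Real.rpow_add h1x]
              norm_num [hε]
          _ ≤ ((1 - x)/2 : ℝ) ^ ((1:ℝ)/4) := by
              rw [Real.div_rpow h1x.le (by norm_num),
                show (1/2 : ℝ) * (1 - x) ^ ((1:ℝ)/4) = (1 - x) ^ ((1:ℝ)/4) / 2 by ring]
              gcongr
              calc (2:ℝ) ^ ((1:ℝ)/4) ≤ (2:ℝ) ^ ((1:ℝ)) :=
                      Real.rpow_le_rpow_of_exponent_le (by norm_num) (by norm_num)
                  _ = 2 := Real.rpow_one 2
          _ ≤ _ := hnum
      -- tendsto atTop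
      have h1 : Tendsto (fun x : ℝ => 1 - x) (𝓝[<] (1:ℝ)) (𝓝[>] (0:ℝ)) := by
        apply tendsto_nhdsWithin_of_tendsto_nhds_of_eventually_within
        · have : Tendsto (fun x : ℝ => 1 - x) (𝓝 (1:ℝ)) (𝓝 (1 - 1 : ℝ)) :=
            (continuous_const.sub continuous_id).tendsto 1
          simpa using this.mono_left nhdsWithin_le_nhds
        · filter_upwards [self_mem_nhdsWithin] with x hx
          simp only [Set.mem_Ioi]
          simp only [Set.mem_Iio] at hx
          linarith
      have h2 : Tendsto (fun t : ℝ => t ^ ε) (𝓝[>] (0:ℝ)) (𝓝[>] (0:ℝ)) := by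
        apply tendsto_nhdsWithin_of_tendsto_nhds_of_eventually_within
        · have : ContinuousAt (fun t : ℝ => t ^ ε) 0 :=
            Real.continuousAt_rpow_const 0 ε (Or.inr hεpos.le)
          have h0 : (0:ℝ) ^ ε = 0 := Real.zero_rpow hεpos.ne'
          simpa [h0] using (this.tendsto.mono_left nhdsWithin_le_nhds)
        · filter_upwards [self_mem_nhdsWithin] with t ht
          exact Set.mem_Ioi.2 (Real.rpow_pos_of_pos (Set.mem_Ioi.1 ht) ε)
      have h3 : Tendsto (fun x : ℝ => (1/2 : ℝ) * ((1 - x) ^ ε)⁻¹) (𝓝[<] (1:ℝ)) atTop := by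
        have := (h2.comp h1).inv_tendsto_nhdsGT_zero
        have h4 : Tendsto (fun x : ℝ => ((1 - x) ^ ε)⁻¹) (𝓝[<] (1:ℝ)) atTop := this
        exact h4.const_mul_atTop (by norm_num)
      obtain ⟨x, hgt, hle, hlow'⟩ :=
        ((h3.eventually (eventually_gt_atTop C)).and (hC.and hlow)).exists
      linarith
    have hbdd : BddBelow S := ⟨0, fun l hl => hl.1.1⟩
    exact le_antisymm (csInf_le hbdd hmem) (le_csInf ⟨_, hmem⟩ hlb)
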